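/- arXiv:1106.2057 — 2 statements merged into one kernel-verified Lean document; each statement's English description precedes it below -/
import Mathlib

section
/- Let X be uniform Bernoulli(1/2), Y its erasure with erasure probability p ∈ (0,1) (erasure event independent of all else), N₂ ~ Bernoulli(D₂/p), N₁ ~ Bernoulli(α) independent of each other and of (X,Y), W₂ = X ⊕ N₂, W₁ = W₂ ⊕ N₁, where D₂/p ≤ 1/2, α ∈ [0,1/2], and (D₂/p) ⋆ α = D₁. Then I(X;W₁) + I(X;W₂|Y,W₁) = p(1 − h(D₂/p)) + (1−p)(1 − h(D₁)) and H(Y|W₁) = h(p) + (1−p)·h(D₁). -/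
open Finset Real
open scoped Classical

noncomputable section

/-- Probability of an event under a finite probability mass function. -/
def pr {Ω : Type} [Fintype Ω] (P : Ω → ℝ) (A : Ω → Prop) : ℝ :=
  ∑ ω, if A ω then P ω else 0

/-- `P` is a probability mass function on the finite type `Ω`. -/
def IsPMF {Ω : Type} [Fintype Ω] (P : Ω → ℝ) : Prop :=
  (∀ ω, 0 ≤ P ω) ∧ ∑ ω, P ω = 1

/-- `-t log₂ t` (with the convention `0 log 0 = 0`). -/
def nlog (t : ℝ) : ℝ := - (t * Real.logb 2 t)

/-- Shannon entropy (base 2) of a random variable `X` on `(Ω, P)`. -/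
def ent {Ω α : Type} [Fintype Ω] [Fintype α] (P : Ω → ℝ) (X : Ω → α) : ℝ :=
  ∑ x, nlog (pr P (fun ω => X ω = x))

/-- Conditional Shannon entropy `H(X|Y) = H(X,Y) - H(Y)`. -/
def condEnt {Ω α β : Type} [Fintype Ω] [Fintype α] [Fintype β]
    (P : Ω → ℝ) (X : Ω → α) (Y : Ω → β) : ℝ :=
  ent P (fun ω => (X ω, Y ω)) - ent P Y

/-- Mutual information `I(X;Y) = H(X) - H(X|Y)`. -/
def mi {Ω α β : Type} [Fintype Ω] [Fintype α] [Fintype β]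
    (P : Ω → ℝ) (X : Ω → α) (Y : Ω → β) : ℝ :=
  ent P X - condEnt P X Y

/-- Conditional mutual information `I(X;Y|Z) = H(X|Z) - H(X|Y,Z)`. -/
def condMI {Ω α β γ : Type} [Fintype Ω] [Fintype α] [Fintype β] [Fintype γ]
    (P : Ω → ℝ) (X : Ω → α) (Y : Ω → β) (Z : Ω → γ) : ℝ :=
  condEnt P X Z - condEnt P X (fun ω => (Y ω, Z ω))

/-- Binary entropy function. -/
def binEnt (a : ℝ) : ℝ := nlog a + nlog (1 - a)

lemma pr_congr {Ω : Type} [Fintype Ω] (P : Ω → ℝ) {A B : Ω → Prop}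
    (h : ∀ ω, A ω ↔ B ω) : pr P A = pr P B :=
  Finset.sum_congr rfl fun ω _ => by simp only [h ω]

lemma pr_not {Ω : Type} [Fintype Ω] (P : Ω → ℝ) (hP : IsPMF P) (A : Ω → Prop) :
    pr P (fun ω => ¬ A ω) = 1 - pr P A := by
  unfold pr
  rw [← hP.2, ← Finset.sum_sub_distrib]
  exact Finset.sum_congr rfl fun ω _ => by by_cases h : A ω <;> simp [h]

lemma pr_split {Ω : Type} [Fintype Ω] (P : Ω → ℝ) (A B : Ω → Prop) :
    pr P A = pr P (fun ω => A ω ∧ B ω) + pr P (fun ω => A ω ∧ ¬ B ω) := by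
  unfold pr
  rw [← Finset.sum_add_distrib]
  exact Finset.sum_congr rfl fun ω _ => by
    by_cases h : A ω <;> by_cases h2 : B ω <;> simp [h, h2]

lemma pr_partition {Ω τ : Type} [Fintype Ω] [Fintype τ] (P : Ω → ℝ)
    (A : Ω → Prop) (f : Ω → τ) :
    pr P A = ∑ t, pr P (fun ω => A ω ∧ f ω = t) := by
  unfold pr
  rw [Finset.sum_comm]
  exact Finset.sum_congr rfl fun ω _ => by
    by_cases h : A ω <;> simp [h]

lemma pr_false {Ω : Type} [Fintype Ω] (P : Ω → ℝ) : pr P (fun _ => False) = 0 := by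
  simp [pr]

lemma nlog_zero : nlog 0 = 0 := by simp [nlog]

lemma nlog_mul (x y : ℝ) : nlog (x * y) = x * nlog y + y * nlog x := by
  unfold nlog
  rcases eq_or_ne x 0 with rfl | hx
  · simp
  rcases eq_or_ne y 0 with rfl | hy
  · simp
  rw [Real.logb, Real.logb, Real.logb, Real.log_mul hx hy]
  ring

lemma nlog_two_inv : nlog (2⁻¹ : ℝ) = 2⁻¹ := by
  have h2 : Real.log 2 ≠ 0 := by
    have := Real.log_pos (by norm_num : (1:ℝ) < 2); linarith
  unfold nlog
  rw [Real.logb, Real.log_inv]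
  field_simp

lemma nlog_half : nlog (1/2 : ℝ) = 1/2 := by
  rw [show (1/2 : ℝ) = 2⁻¹ by norm_num, nlog_two_inv]
  try norm_num

lemma decomp {Ω : Type} [Fintype Ω] (P : Ω → ℝ) (hP : IsPMF P)
    (X N₁ N₂ : Ω → Bool) (Y : Ω → Option Bool) (p q a : ℝ)
    (hX : ∀ b, pr P (fun ω => X ω = b) = 1/2)
    (hN2 : pr P (fun ω => N₂ ω = true) = q)
    (hN1 : pr P (fun ω => N₁ ω = true) = a)
    (hindep : ∀ (b b1 b2 : Bool),
      pr P (fun ω => X ω = b ∧ N₁ ω = b1 ∧ N₂ ω = b2)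
        = pr P (fun ω => X ω = b) * pr P (fun ω => N₁ ω = b1)
          * pr P (fun ω => N₂ ω = b2))
    (hstruct : ∀ ω, Y ω = some (X ω) ∨ Y ω = none)
    (hindE : ∀ (b b1 b2 : Bool),
      pr P (fun ω => Y ω = none ∧ X ω = b ∧ N₁ ω = b1 ∧ N₂ ω = b2)
        = p * pr P (fun ω => X ω = b ∧ N₁ ω = b1 ∧ N₂ ω = b2))
    (C : Option Bool → Bool → Bool → Bool → Prop) :
    pr P (fun ω => C (Y ω) (X ω) (N₁ ω) (N₂ ω)) =
      ∑ b : Bool, ∑ b1 : Bool, ∑ b2 : Bool,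
        ((if C none b b1 b2 then p else 0) + (if C (some b) b b1 b2 then 1 - p else 0))
          * (1/2 * (if b1 then a else 1 - a) * (if b2 then q else 1 - q)) := by
  have hN1' : ∀ b1 : Bool, pr P (fun ω => N₁ ω = b1) = if b1 then a else 1 - a := by
    intro b1
    cases b1
    · have h := pr_not P hP (fun ω => N₁ ω = true)
      rw [hN1] at h
      rw [← h]
      exact pr_congr P fun ω => by simp
    · simpa using hN1
  have hN2' : ∀ b2 : Bool, pr P (fun ω => N₂ ω = b2) = if b2 then q else 1 - q := by
    intro b2
    cases b2
    · have h := pr_not P hP (fun ω => N₂ ω = true)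
      rw [hN2] at h
      rw [← h]
      exact pr_congr P fun ω => by simp
    · simpa using hN2
  have joint : ∀ b b1 b2 : Bool, pr P (fun ω => X ω = b ∧ N₁ ω = b1 ∧ N₂ ω = b2)
      = 1/2 * (if b1 then a else 1 - a) * (if b2 then q else 1 - q) := by
    intro b b1 b2
    rw [hindep, hX, hN1', hN2']
  have erased : ∀ b b1 b2 : Bool,
      pr P (fun ω => Y ω = none ∧ X ω = b ∧ N₁ ω = b1 ∧ N₂ ω = b2)
      = p * (1/2 * (if b1 then a else 1 - a) * (if b2 then q else 1 - q)) := by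
    intro b b1 b2; rw [hindE, joint]
  have nonerased : ∀ b b1 b2 : Bool,
      pr P (fun ω => ¬ (Y ω = none) ∧ X ω = b ∧ N₁ ω = b1 ∧ N₂ ω = b2)
      = (1 - p) * (1/2 * (if b1 then a else 1 - a) * (if b2 then q else 1 - q)) := by
    intro b b1 b2
    have hs := pr_split P (fun ω => X ω = b ∧ N₁ ω = b1 ∧ N₂ ω = b2)
      (fun ω => Y ω = none)
    rw [joint] at hs
    have e1 : pr P (fun ω => (X ω = b ∧ N₁ ω = b1 ∧ N₂ ω = b2) ∧ Y ω = none)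
        = p * (1/2 * (if b1 then a else 1 - a) * (if b2 then q else 1 - q)) := by
      rw [← erased b b1 b2]
      exact pr_congr P fun ω => by tauto
    have e2 : pr P (fun ω => (X ω = b ∧ N₁ ω = b1 ∧ N₂ ω = b2) ∧ ¬ Y ω = none)
        = pr P (fun ω => ¬ (Y ω = none) ∧ X ω = b ∧ N₁ ω = b1 ∧ N₂ ω = b2) :=
      pr_congr P fun ω => by tauto
    rw [e1, e2] at hs
    linarith
  rw [pr_partition P _ (fun ω => (X ω, N₁ ω, N₂ ω))]
  rw [Fintype.sum_prod_type]
  refine Finset.sum_congr rfl fun b _ => ?_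
  rw [Fintype.sum_prod_type]
  refine Finset.sum_congr rfl fun b1 _ => Finset.sum_congr rfl fun b2 _ => ?_
  rw [pr_split P _ (fun ω => Y ω = none)]
  have cell1 : pr P (fun ω => (C (Y ω) (X ω) (N₁ ω) (N₂ ω) ∧ (X ω, N₁ ω, N₂ ω) = (b, b1, b2)) ∧ Y ω = none)
      = if C none b b1 b2 then p * (1/2 * (if b1 then a else 1 - a) * (if b2 then q else 1 - q)) else 0 := by
    by_cases hc : C none b b1 b2
    · rw [if_pos hc, ← erased b b1 b2]
      refine pr_congr P fun ω => ?_
      constructor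
      · rintro ⟨⟨_, ht⟩, hy⟩
        exact ⟨hy, by simpa using ht⟩
      · rintro ⟨hy, hx, h1, h2⟩
        exact ⟨⟨by rw [hy, hx, h1, h2]; exact hc, by rw [hx, h1, h2]⟩, hy⟩
    · rw [if_neg hc, ← pr_false P]
      refine pr_congr P fun ω => ?_
      constructor
      · rintro ⟨⟨hC, ht⟩, hy⟩
        obtain ⟨hx, h1, h2⟩ : X ω = b ∧ N₁ ω = b1 ∧ N₂ ω = b2 := by simpa using ht
        rw [hy, hx, h1, h2] at hC
        exact hc hC
      · rintro ⟨⟩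
  have cell2 : pr P (fun ω => (C (Y ω) (X ω) (N₁ ω) (N₂ ω) ∧ (X ω, N₁ ω, N₂ ω) = (b, b1, b2)) ∧ ¬ Y ω = none)
      = if C (some b) b b1 b2 then (1 - p) * (1/2 * (if b1 then a else 1 - a) * (if b2 then q else 1 - q)) else 0 := by
    by_cases hc : C (some b) b b1 b2
    · rw [if_pos hc, ← nonerased b b1 b2]
      refine pr_congr P fun ω => ?_
      constructor
      · rintro ⟨⟨_, ht⟩, hy⟩
        exact ⟨hy, by simpa using ht⟩
      · rintro ⟨hy, hx, h1, h2⟩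
        have hY : Y ω = some b := by
          rcases hstruct ω with h | h
          · rw [h, hx]
          · exact absurd h hy
        exact ⟨⟨by rw [hY, hx, h1, h2]; exact hc, by rw [hx, h1, h2]⟩, hy⟩
    · rw [if_neg hc, ← pr_false P]
      refine pr_congr P fun ω => ?_
      constructor
      · rintro ⟨⟨hC, ht⟩, hy⟩
        obtain ⟨hx, h1, h2⟩ : X ω = b ∧ N₁ ω = b1 ∧ N₂ ω = b2 := by simpa using ht
        have hY : Y ω = some b := by
          rcases hstruct ω with h | h
          · rw [h, hx]
          · exact absurd h hy
        rw [hY, hx, h1, h2] at hC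
        exact hc hC
      · rintro ⟨⟩
  rw [cell1, cell2]
  by_cases h1 : C none b b1 b2 <;> by_cases h2 : C (some b) b b1 b2 <;>
    cases b1 <;> cases b2 <;> simp [h1, h2] <;> ring

set_option maxHeartbeats 2000000 in
/-- Achievability computation for regime L₄: with `X` uniform, `Y` its erasure
(probability `p`), `N₂ ~ Ber(D₂/p)`, `N₁ ~ Ber(α)` independent of each other and
of `(X,Y)`, `W₂ = X ⊕ N₂`, `W₁ = W₂ ⊕ N₁`, and `(D₂/p) ⋆ α = D₁`:
`I(X;W₁) + I(X;W₂|Y,W₁) = p(1 - h(D₂/p)) + (1-p)(1 - h(D₁))` and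
`H(Y|W₁) = h(p) + (1-p)h(D₁)`. -/
theorem stmt11 {Ω : Type} [Fintype Ω] (P : Ω → ℝ) (hP : IsPMF P)
    (X N₁ N₂ : Ω → Bool) (Y : Ω → Option Bool)
    (p D₁ D₂ α : ℝ) (hp : 0 < p) (hp1 : p < 1)
    (hD20 : 0 ≤ D₂) (hqh : D₂ / p ≤ 1/2) (hα0 : 0 ≤ α) (hαh : α ≤ 1/2)
    (hconv : (D₂/p) * (1 - α) + α * (1 - D₂/p) = D₁)
    (hX : ∀ b, pr P (fun ω => X ω = b) = 1/2)
    (hN2 : pr P (fun ω => N₂ ω = true) = D₂ / p)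
    (hN1 : pr P (fun ω => N₁ ω = true) = α)
    (hindep : ∀ (b b1 b2 : Bool),
      pr P (fun ω => X ω = b ∧ N₁ ω = b1 ∧ N₂ ω = b2)
        = pr P (fun ω => X ω = b) * pr P (fun ω => N₁ ω = b1)
          * pr P (fun ω => N₂ ω = b2))
    (hstruct : ∀ ω, Y ω = some (X ω) ∨ Y ω = none)
    (hindE : ∀ (b b1 b2 : Bool),
      pr P (fun ω => Y ω = none ∧ X ω = b ∧ N₁ ω = b1 ∧ N₂ ω = b2)
        = p * pr P (fun ω => X ω = b ∧ N₁ ω = b1 ∧ N₂ ω = b2)) :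
    mi P X (fun ω => Bool.xor (Bool.xor (X ω) (N₂ ω)) (N₁ ω))
      + condMI P X (fun ω => Bool.xor (X ω) (N₂ ω))
          (fun ω => (Y ω, Bool.xor (Bool.xor (X ω) (N₂ ω)) (N₁ ω)))
      = p * (1 - binEnt (D₂/p)) + (1 - p) * (1 - binEnt D₁)
    ∧ condEnt P Y (fun ω => Bool.xor (Bool.xor (X ω) (N₂ ω)) (N₁ ω))
      = binEnt p + (1 - p) * binEnt D₁ := by
  set q := D₂ / p with hqdef
  have key := decomp P hP X N₁ N₂ Y p q α hX hN2 hN1 hindep hstruct hindE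
  -- probability computations
  have prW1 : ∀ w : Bool,
      pr P (fun ω => Bool.xor (Bool.xor (X ω) (N₂ ω)) (N₁ ω) = w) = 1/2 := by
    intro w
    have h : pr P (fun ω => Bool.xor (Bool.xor (X ω) (N₂ ω)) (N₁ ω) = w) = _ :=
      key (fun y b b1 b2 => Bool.xor (Bool.xor b b2) b1 = w)
    rw [h]
    cases w <;> simp [Fintype.sum_bool, -mul_eq_mul_left_iff, -mul_eq_mul_right_iff] <;> first | (rw [← hconv]; ring) | ring
  have prXW1 : ∀ b w : Bool,
      pr P (fun ω => (X ω, Bool.xor (Bool.xor (X ω) (N₂ ω)) (N₁ ω)) = (b, w))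
        = (if b = w then 1 - D₁ else D₁) * (1/2) := by
    intro b w
    have h : pr P (fun ω => (X ω, Bool.xor (Bool.xor (X ω) (N₂ ω)) (N₁ ω)) = (b, w)) = _ :=
      key (fun y bb b1 b2 => ((bb, Bool.xor (Bool.xor bb b2) b1) : Bool × Bool) = (b, w))
    rw [h]
    cases b <;> cases w <;> simp [Fintype.sum_bool, -mul_eq_mul_left_iff, -mul_eq_mul_right_iff] <;> first | (rw [← hconv]; ring) | ring
  have prYW1 : ∀ (y : Option Bool) (w : Bool),
      pr P (fun ω => (Y ω, Bool.xor (Bool.xor (X ω) (N₂ ω)) (N₁ ω)) = (y, w))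
        = y.elim (p * (1/2)) (fun b => (1 - p) * ((if b = w then 1 - D₁ else D₁) * (1/2))) := by
    intro y w
    have h : pr P (fun ω => (Y ω, Bool.xor (Bool.xor (X ω) (N₂ ω)) (N₁ ω)) = (y, w)) = _ :=
      key (fun yy b b1 b2 => ((yy, Bool.xor (Bool.xor b b2) b1) : Option Bool × Bool) = (y, w))
    rw [h]
    rcases y with _ | b'
    · cases w <;> simp [Fintype.sum_bool, -mul_eq_mul_left_iff, -mul_eq_mul_right_iff] <;> first | (rw [← hconv]; ring) | ring
    · cases b' <;> cases w <;> simp [Fintype.sum_bool, -mul_eq_mul_left_iff, -mul_eq_mul_right_iff] <;> first | (rw [← hconv]; ring) | ring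
  have prXYW1 : ∀ (b : Bool) (y : Option Bool) (w : Bool),
      pr P (fun ω => (X ω, (Y ω, Bool.xor (Bool.xor (X ω) (N₂ ω)) (N₁ ω))) = (b, (y, w)))
        = (if y = none then p else if y = some b then 1 - p else 0)
          * ((if b = w then 1 - D₁ else D₁) * (1/2)) := by
    intro b y w
    have h : pr P (fun ω => (X ω, (Y ω, Bool.xor (Bool.xor (X ω) (N₂ ω)) (N₁ ω))) = (b, (y, w))) = _ :=
      key (fun yy bb b1 b2 =>
        ((bb, (yy, Bool.xor (Bool.xor bb b2) b1)) : Bool × Option Bool × Bool) = (b, (y, w)))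
    rw [h]
    rcases y with _ | b' <;> [skip; cases b'] <;> cases b <;> cases w <;>
      simp [Fintype.sum_bool, -mul_eq_mul_left_iff, -mul_eq_mul_right_iff] <;> first | (rw [← hconv]; ring) | ring
  have prW2YW1 : ∀ (w2 : Bool) (y : Option Bool) (w1 : Bool),
      pr P (fun ω => (Bool.xor (X ω) (N₂ ω),
          (Y ω, Bool.xor (Bool.xor (X ω) (N₂ ω)) (N₁ ω))) = (w2, (y, w1)))
        = y.elim (p * ((if Bool.xor w2 w1 then α else 1 - α) * (1/2)))
            (fun b => (1 - p) * ((if Bool.xor b w2 then q else 1 - q)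
              * ((if Bool.xor w2 w1 then α else 1 - α) * (1/2)))) := by
    intro w2 y w1
    have h : pr P (fun ω => (Bool.xor (X ω) (N₂ ω),
          (Y ω, Bool.xor (Bool.xor (X ω) (N₂ ω)) (N₁ ω))) = (w2, (y, w1))) = _ :=
      key (fun yy bb b1 b2 =>
        ((Bool.xor bb b2, (yy, Bool.xor (Bool.xor bb b2) b1)) : Bool × Option Bool × Bool)
          = (w2, (y, w1)))
    rw [h]
    rcases y with _ | b'
    · cases w2 <;> cases w1 <;> simp [Fintype.sum_bool, -mul_eq_mul_left_iff, -mul_eq_mul_right_iff] <;> ring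
    · cases b' <;> cases w2 <;> cases w1 <;> simp [Fintype.sum_bool, -mul_eq_mul_left_iff, -mul_eq_mul_right_iff] <;> ring
  have prXW2YW1 : ∀ (b w2 : Bool) (y : Option Bool) (w1 : Bool),
      pr P (fun ω => (X ω, (Bool.xor (X ω) (N₂ ω),
          (Y ω, Bool.xor (Bool.xor (X ω) (N₂ ω)) (N₁ ω)))) = (b, (w2, (y, w1))))
        = (if y = none then p else if y = some b then 1 - p else 0)
          * ((if Bool.xor b w2 then q else 1 - q)
            * ((if Bool.xor w2 w1 then α else 1 - α) * (1/2))) := by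
    intro b w2 y w1
    have h : pr P (fun ω => (X ω, (Bool.xor (X ω) (N₂ ω),
          (Y ω, Bool.xor (Bool.xor (X ω) (N₂ ω)) (N₁ ω)))) = (b, (w2, (y, w1)))) = _ :=
      key (fun yy bb b1 b2 =>
        ((bb, (Bool.xor bb b2, (yy, Bool.xor (Bool.xor bb b2) b1)))
          : Bool × Bool × Option Bool × Bool) = (b, (w2, (y, w1))))
    rw [h]
    rcases y with _ | b'
    · cases b <;> cases w2 <;> cases w1 <;> simp [Fintype.sum_bool, -mul_eq_mul_left_iff, -mul_eq_mul_right_iff] <;> ring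
    · cases b' <;> cases b <;> cases w2 <;> cases w1 <;> simp [Fintype.sum_bool, -mul_eq_mul_left_iff, -mul_eq_mul_right_iff] <;> ring
  -- entropy computations
  have hentX : ent P X = 1 := by
    unfold ent
    rw [Fintype.sum_bool, hX, hX, nlog_half]
    norm_num
  have hentW1 : ent P (fun ω => Bool.xor (Bool.xor (X ω) (N₂ ω)) (N₁ ω)) = 1 := by
    unfold ent
    simp only [Fintype.sum_bool, prW1, nlog_half]
    norm_num
  have hentXW1 : ent P (fun ω => (X ω, Bool.xor (Bool.xor (X ω) (N₂ ω)) (N₁ ω)))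
      = 1 + binEnt D₁ := by
    unfold ent binEnt
    simp only [Fintype.sum_prod_type, Fintype.sum_bool, prXW1]
    simp [nlog_mul, nlog_half, nlog_two_inv]
    ring
  have hentYW1 : ent P (fun ω => (Y ω, Bool.xor (Bool.xor (X ω) (N₂ ω)) (N₁ ω)))
      = 1 + binEnt p + (1 - p) * binEnt D₁ := by
    unfold ent binEnt
    simp only [Fintype.sum_prod_type, Fintype.sum_option, Fintype.sum_bool, prYW1]
    simp [nlog_mul, nlog_half, nlog_two_inv]
    ring
  have hentXYW1 : ent P (fun ω => (X ω, (Y ω, Bool.xor (Bool.xor (X ω) (N₂ ω)) (N₁ ω))))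
      = 1 + binEnt p + binEnt D₁ := by
    unfold ent binEnt
    simp only [Fintype.sum_prod_type, Fintype.sum_option, Fintype.sum_bool, prXYW1]
    simp [nlog_mul, nlog_half, nlog_two_inv, nlog_zero]
    ring
  have hentW2YW1 : ent P (fun ω => (Bool.xor (X ω) (N₂ ω),
      (Y ω, Bool.xor (Bool.xor (X ω) (N₂ ω)) (N₁ ω))))
      = 1 + binEnt p + binEnt α + (1 - p) * binEnt q := by
    unfold ent binEnt
    simp only [Fintype.sum_prod_type, Fintype.sum_option, Fintype.sum_bool, prW2YW1]
    simp [nlog_mul, nlog_half, nlog_two_inv]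
    ring
  have hentXW2YW1 : ent P (fun ω => (X ω, (Bool.xor (X ω) (N₂ ω),
      (Y ω, Bool.xor (Bool.xor (X ω) (N₂ ω)) (N₁ ω)))))
      = 1 + binEnt p + binEnt q + binEnt α := by
    unfold ent binEnt
    simp only [Fintype.sum_prod_type, Fintype.sum_option, Fintype.sum_bool, prXW2YW1]
    simp [nlog_mul, nlog_half, nlog_two_inv, nlog_zero]
    ring
  constructor
  · simp only [mi, condMI, condEnt]
    rw [hentX, hentW1, hentXW1, hentYW1, hentXYW1, hentW2YW1, hentXW2YW1]
    ring
  · simp only [condEnt]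
    rw [hentYW1, hentW1]
    ring
end
end

section
/- Let Y, U, J be random variables on a finite probability space with Y−U−J a Markov chain, and suppose there is a constant M ≥ 1 such that P(J=j | U=u) ∈ {0, 1/M} for all (j,u) with P(U=u)>0, and P(J=j) ≥ (1−ε)/M for every j in the support of J, with ε ∈ [0,1). Then for every j in the support of J and every y, P(Y=y | J=j) ≤ (1−ε)⁻¹ max_{y'} P(Y=y'). -/
open Finset Real
open scoped Classical

noncomputable section

lemma pr_nonneg {Ω : Type} [Fintype Ω] {P : Ω → ℝ} (h : ∀ ω, 0 ≤ P ω)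
    (A : Ω → Prop) : 0 ≤ pr P A := by
  apply Finset.sum_nonneg
  intro ω _
  split <;> [exact h ω; exact le_refl 0]

lemma pr_mono {Ω : Type} [Fintype Ω] {P : Ω → ℝ} (h : ∀ ω, 0 ≤ P ω)
    {A B : Ω → Prop} (hAB : ∀ ω, A ω → B ω) : pr P A ≤ pr P B := by
  apply Finset.sum_le_sum
  intro ω _
  by_cases hA : A ω
  · simp [hA, hAB ω hA]
  · simp only [hA, if_false]
    split <;> [exact h ω; exact le_refl 0]

lemma pr_fiber {Ω β : Type} [Fintype Ω] [Fintype β] (P : Ω → ℝ)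
    (A : Ω → Prop) (U : Ω → β) :
    pr P A = ∑ u, pr P (fun ω => A ω ∧ U ω = u) := by
  unfold pr
  rw [Finset.sum_comm]
  apply Finset.sum_congr rfl
  intro ω _
  by_cases hA : A ω
  · simp [hA]
  · simp [hA]

/-- Single-shot bin-index independence: if `Y - U - J` is a Markov chain, the bin
assignment satisfies `P(J=j|U=u) ∈ {0, 1/M}`, and `P(J=j) ≥ (1-ε)/M` on the
support of `J`, then `P(Y=y|J=j) ≤ (1-ε)⁻¹ max_{y'} P(Y=y')`. -/
theorem stmt18 {Ω α β γ : Type} [Fintype Ω] [Fintype α] [Fintype β] [Fintype γ]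
    [Nonempty α]
    (P : Ω → ℝ) (hP : IsPMF P)
    (Y : Ω → α) (U : Ω → β) (J : Ω → γ)
    (M ε : ℝ) (hM : 1 ≤ M) (hε0 : 0 ≤ ε) (hε1 : ε < 1)
    (hMarkov : ∀ (y : α) (u : β) (j : γ),
      pr P (fun ω => Y ω = y ∧ U ω = u ∧ J ω = j) * pr P (fun ω => U ω = u)
        = pr P (fun ω => Y ω = y ∧ U ω = u) * pr P (fun ω => U ω = u ∧ J ω = j))
    (hbin : ∀ (j : γ) (u : β), 0 < pr P (fun ω => U ω = u) →
      pr P (fun ω => U ω = u ∧ J ω = j) / pr P (fun ω => U ω = u) = 0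
      ∨ pr P (fun ω => U ω = u ∧ J ω = j) / pr P (fun ω => U ω = u) = 1 / M)
    (hlow : ∀ j : γ, 0 < pr P (fun ω => J ω = j) →
      pr P (fun ω => J ω = j) ≥ (1 - ε) / M) :
    ∀ j : γ, 0 < pr P (fun ω => J ω = j) → ∀ y : α,
      pr P (fun ω => Y ω = y ∧ J ω = j) / pr P (fun ω => J ω = j)
        ≤ (1 - ε)⁻¹ * (Finset.univ.sup' Finset.univ_nonempty
            fun y' : α => pr P (fun ω => Y ω = y')) := by
  intro j hj y
  obtain ⟨hP0, _⟩ := hP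
  set S := (Finset.univ.sup' Finset.univ_nonempty
      fun y' : α => pr P (fun ω => Y ω = y')) with hS
  have hyS : pr P (fun ω => Y ω = y) ≤ S := Finset.le_sup' (fun y' : α => pr P (fun ω => Y ω = y')) (Finset.mem_univ y)
  have hS0 : 0 ≤ S := le_trans (pr_nonneg hP0 _) hyS
  have hε : 0 < 1 - ε := by linarith
  have hMpos : 0 < M := by linarith
  -- Step 1: pr(Y=y ∧ J=j) ≤ pr(Y=y)/M
  have key : pr P (fun ω => Y ω = y ∧ J ω = j) ≤ pr P (fun ω => Y ω = y) / M := by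
    have h1 : pr P (fun ω => Y ω = y ∧ J ω = j)
        = ∑ u, pr P (fun ω => (Y ω = y ∧ J ω = j) ∧ U ω = u) :=
      pr_fiber P _ U
    have h2 : pr P (fun ω => Y ω = y) / M
        = ∑ u, pr P (fun ω => Y ω = y ∧ U ω = u) / M := by
      rw [pr_fiber P (fun ω => Y ω = y) U, Finset.sum_div]
    rw [h1, h2]
    apply Finset.sum_le_sum
    intro u _
    have hterm : pr P (fun ω => (Y ω = y ∧ J ω = j) ∧ U ω = u)
        = pr P (fun ω => Y ω = y ∧ U ω = u ∧ J ω = j) := by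
      unfold pr; apply Finset.sum_congr rfl; intro ω _; congr 1
      simp only [eq_iff_iff]; tauto
    rw [hterm]
    by_cases hu : 0 < pr P (fun ω => U ω = u)
    · have hne : pr P (fun ω => U ω = u) ≠ 0 := ne_of_gt hu
      have hMk := hMarkov y u j
      have heq : pr P (fun ω => Y ω = y ∧ U ω = u ∧ J ω = j)
          = pr P (fun ω => Y ω = y ∧ U ω = u)
            * (pr P (fun ω => U ω = u ∧ J ω = j) / pr P (fun ω => U ω = u)) := by
        field_simp
        linarith [hMk]
      rw [heq]
      have hr : pr P (fun ω => U ω = u ∧ J ω = j) / pr P (fun ω => U ω = u)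
          ≤ 1 / M := by
        rcases hbin j u hu with h | h
        · rw [h]; positivity
        · rw [h]
      have hyn : 0 ≤ pr P (fun ω => Y ω = y ∧ U ω = u) := pr_nonneg hP0 _
      calc pr P (fun ω => Y ω = y ∧ U ω = u)
            * (pr P (fun ω => U ω = u ∧ J ω = j) / pr P (fun ω => U ω = u))
          ≤ pr P (fun ω => Y ω = y ∧ U ω = u) * (1 / M) :=
            mul_le_mul_of_nonneg_left hr hyn
        _ = pr P (fun ω => Y ω = y ∧ U ω = u) / M := by ring
    · have hz : pr P (fun ω => U ω = u) = 0 :=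
        le_antisymm (not_lt.1 hu) (pr_nonneg hP0 _)
      have : pr P (fun ω => Y ω = y ∧ U ω = u ∧ J ω = j) ≤ 0 := by
        rw [← hz]
        exact pr_mono hP0 (fun ω h => h.2.1)
      have h0 : pr P (fun ω => Y ω = y ∧ U ω = u ∧ J ω = j) = 0 :=
        le_antisymm this (pr_nonneg hP0 _)
      rw [h0]
      exact div_nonneg (pr_nonneg hP0 _) hMpos.le
  -- Step 2: divide
  rw [div_le_iff₀ hj]
  have hjlow := hlow j hj
  calc pr P (fun ω => Y ω = y ∧ J ω = j)
      ≤ pr P (fun ω => Y ω = y) / M := key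
    _ ≤ S / M := by gcongr
    _ = (1 - ε)⁻¹ * S * ((1 - ε) / M) := by field_simp
    _ ≤ (1 - ε)⁻¹ * S * pr P (fun ω => J ω = j) := by
        apply mul_le_mul_of_nonneg_left hjlow
        positivity
end
end
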